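/- If a labeled graph G on [n] is 12-representable by a 231-avoiding word, then G is 12-representable by a 231-avoiding permutation of [n]. -/

import Mathlib

/-- Every occurrence of `j` precedes every occurrence of `i` in the word `w`. -/
def EveryBefore (w : List ℕ) (j i : ℕ) : Prop :=
  ∀ p q : Fin w.length, w.get p = j → w.get q = i → p < q

/-- The word `w` 12-represents the graph `G` on the vertex set `{1, …, n}`:
`w` uses only letters from `{1, …, n}`, contains each of them at least once, and
for `i < j` in `{1, …, n}`, `i` and `j` are adjacent iff every `j` occurs before every `i`. -/
def Represents12 (n : ℕ) (G : SimpleGraph ℕ) (w : List ℕ) : Prop :=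
  (∀ x ∈ w, 1 ≤ x ∧ x ≤ n) ∧
  (∀ i, 1 ≤ i → i ≤ n → i ∈ w) ∧
  (∀ i j, 1 ≤ i → i < j → j ≤ n → (G.Adj i j ↔ EveryBefore w j i))

/-- `w` is a permutation of `{1, …, n}`, i.e. each letter occurs exactly once. -/
def IsPermWord (n : ℕ) (w : List ℕ) : Prop :=
  w.Perm (List.range' 1 n)

/-- `w` avoids the pattern 231: no subsequence b, c, a with a < b < c. -/
def Avoids231 (w : List ℕ) : Prop :=
  ¬ ∃ p q r : Fin w.length, p < q ∧ q < r ∧ w.get r < w.get p ∧ w.get p < w.get q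

/-- The strict order induced by the word `w`: smaller letters come first unless forced. -/
def Prec (w : List ℕ) (x y : ℕ) : Prop :=
  (x < y ∧ ¬ EveryBefore w y x) ∨ (y < x ∧ EveryBefore w x y)

lemma prec_ne {w : List ℕ} {x y : ℕ} (h : Prec w x y) : x ≠ y := by
  rcases h with ⟨h, _⟩ | ⟨h, _⟩ <;> omega

lemma prec_asymm {w : List ℕ} {x y : ℕ} (h1 : Prec w x y) (h2 : Prec w y x) : False := by
  rcases h1 with ⟨h1, hs1⟩ | ⟨h1, hs1⟩ <;> rcases h2 with ⟨h2, hs2⟩ | ⟨h2, hs2⟩ <;>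
    first | omega | exact hs1 hs2 | exact hs2 hs1

lemma no231 {w : List ℕ} (hA : Avoids231 w) {a b c : ℕ} (pb pc pa : Fin w.length)
    (hb : w.get pb = b) (hc : w.get pc = c) (ha : w.get pa = a)
    (h1 : pb ≤ pc) (h2 : pc < pa) (hab : a < b) (hbc : b < c) : False := by
  apply hA
  refine ⟨pb, pc, pa, lt_of_le_of_ne h1 ?_, h2, ?_, ?_⟩
  · intro he; rw [he, hc] at hb; omega
  · rw [ha, hb]; exact hab
  · rw [hb, hc]; exact hbc

lemma not_everyBefore {w : List ℕ} {u v : ℕ} (h : ¬ EveryBefore w u v) :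
    ∃ p q : Fin w.length, w.get p = u ∧ w.get q = v ∧ q ≤ p := by
  simp only [EveryBefore, not_forall, not_lt] at h
  obtain ⟨p, q, hp, hq, hle⟩ := h
  exact ⟨p, q, hp, hq, hle⟩

lemma mem_pos {w : List ℕ} {x : ℕ} (h : x ∈ w) : ∃ p : Fin w.length, w.get p = x :=
  List.mem_iff_get.mp h

lemma prec_trans {w : List ℕ} (hA : Avoids231 w) {x y z : ℕ}
    (hx : x ∈ w) (hy : y ∈ w) (hz : z ∈ w)
    (h1 : Prec w x y) (h2 : Prec w y z) : Prec w x z := by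
  rcases Nat.lt_trichotomy x z with hxz | rfl | hxz
  · -- show left disjunct
    left
    refine ⟨hxz, ?_⟩
    intro hsep  -- hsep : EveryBefore w z x, i.e. all z before all x
    rcases h1 with ⟨hlt1, hns1⟩ | ⟨hlt1, hs1⟩ <;> rcases h2 with ⟨hlt2, hns2⟩ | ⟨hlt2, hs2⟩
    · -- x<y, ¬Sep(y,x); y<z, ¬Sep(z,y)
      obtain ⟨py, px, hpy, hpx, hle1⟩ := not_everyBefore hns1
      obtain ⟨pz, qy, hpz, hqy, hle2⟩ := not_everyBefore hns2
      exact no231 hA qy pz px hqy hpz hpx hle2 (hsep pz px hpz hpx) hlt1 hlt2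
    · -- x<y, ¬Sep(y,x); z<y, Sep(y,z)
      obtain ⟨py, px, hpy, hpx, hle1⟩ := not_everyBefore hns1
      obtain ⟨pz, hpz⟩ := mem_pos hz
      exact absurd (hsep pz px hpz hpx) (by
        have := hs2 py pz hpy hpz
        exact not_lt.mpr (le_of_lt (lt_of_le_of_lt hle1 this)))
    · -- y<x, Sep(x,y); y<z, ¬Sep(z,y)
      obtain ⟨pz, qy, hpz, hqy, hle2⟩ := not_everyBefore hns2
      obtain ⟨px, hpx⟩ := mem_pos hx
      have h3 := hsep pz px hpz hpx
      have h4 := hs1 px qy hpx hqy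
      exact absurd (lt_of_le_of_lt hle2 (lt_trans h3 h4)) (lt_irrefl _)
    · omega
  · exact absurd (prec_asymm h1 h2) id
  · -- z < x : show right disjunct
    right
    refine ⟨hxz, ?_⟩
    intro px pz hpx hpz
    by_contra hc
    have hle : pz ≤ px := not_lt.mp hc
    rcases h1 with ⟨hlt1, hns1⟩ | ⟨hlt1, hs1⟩ <;> rcases h2 with ⟨hlt2, hns2⟩ | ⟨hlt2, hs2⟩
    · omega
    · -- x<y, ¬Sep(y,x); z<y, Sep(y,z) : z<x<y
      obtain ⟨py, px', hpy, hpx', hle1⟩ := not_everyBefore hns1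
      have h3 := hs2 py pz hpy hpz
      exact no231 hA px' py pz hpx' hpy hpz hle1 h3 hxz hlt1
    · -- y<x, Sep(x,y); y<z, ¬Sep(z,y) : y<z<x
      obtain ⟨pz', qy, hpz', hqy, hle2⟩ := not_everyBefore hns2
      have h3 := hs1 px qy hpx hqy
      exact no231 hA pz px qy hpz hpx hqy hle h3 hlt2 hxz
    · -- y<x, Sep(x,y); z<y, Sep(y,z)
      obtain ⟨qy, hqy⟩ := mem_pos hy
      have h3 := hs1 px qy hpx hqy
      have h4 := hs2 qy pz hqy hpz
      exact absurd (lt_trans h3 h4) hc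

/-- Extension of `Prec` on `{1,…,n}` to a total preorder on all of `ℕ`. -/
def LeW (n : ℕ) (w : List ℕ) (x y : ℕ) : Prop :=
  if 1 ≤ x ∧ x ≤ n then
    if 1 ≤ y ∧ y ≤ n then x = y ∨ Prec w x y else True
  else
    if 1 ≤ y ∧ y ≤ n then False else x ≤ y

lemma leW_trans {n : ℕ} {w : List ℕ} (hA : Avoids231 w)
    (hW : ∀ i, 1 ≤ i → i ≤ n → i ∈ w) :
    ∀ x y z, LeW n w x y → LeW n w y z → LeW n w x z := by
  intro x y z h1 h2
  by_cases hx : 1 ≤ x ∧ x ≤ n <;> by_cases hy : 1 ≤ y ∧ y ≤ n <;>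
    by_cases hz : 1 ≤ z ∧ z ≤ n <;>
    simp only [LeW, hx, hy, hz, if_pos, if_neg, if_true, if_false, not_false_iff] at h1 h2 ⊢ <;>
    try trivial
  · rcases h1 with rfl | h1
    · exact h2
    rcases h2 with rfl | h2
    · exact Or.inr h1
    exact Or.inr (prec_trans hA (hW x hx.1 hx.2) (hW y hy.1 hy.2) (hW z hz.1 hz.2) h1 h2)
  · omega

lemma leW_total {n : ℕ} (w : List ℕ) :
    ∀ x y, LeW n w x y ∨ LeW n w y x := by
  intro x y
  by_cases hx : 1 ≤ x ∧ x ≤ n <;> by_cases hy : 1 ≤ y ∧ y ≤ n <;>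
    simp only [LeW, hx, hy, if_pos, if_neg, if_true, if_false] <;> try tauto
  · rcases Nat.lt_trichotomy x y with h | h | h
    · by_cases hs : EveryBefore w y x
      · exact Or.inr (Or.inr (Or.inr ⟨h, hs⟩))
      · exact Or.inl (Or.inr (Or.inl ⟨h, hs⟩))
    · exact Or.inl (Or.inl h)
    · by_cases hs : EveryBefore w x y
      · exact Or.inl (Or.inr (Or.inr ⟨h, hs⟩))
      · exact Or.inr (Or.inr (Or.inl ⟨h, hs⟩))
  · omega

theorem stmt_6 (n : ℕ) (G : SimpleGraph ℕ)
    (h : ∃ w, Avoids231 w ∧ Represents12 n G w) :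
    ∃ π, IsPermWord n π ∧ Avoids231 π ∧ Represents12 n G π := by
  classical
  obtain ⟨w, hA, hmemw, hall, hadj⟩ := h
  set le : ℕ → ℕ → Bool := fun x y => decide (LeW n w x y) with hle
  set π := (List.range' 1 n).mergeSort le with hπdef
  have hperm : π.Perm (List.range' 1 n) := List.mergeSort_perm _ _
  have hnd : π.Nodup := hperm.symm.nodup (List.nodup_range' (s := 1) (n := n))
  have hmemπ : ∀ x, x ∈ π ↔ (1 ≤ x ∧ x ≤ n) := by
    intro x
    rw [hperm.mem_iff, List.mem_range'_1]
    omega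
  have hsorted : π.Pairwise (LeW n w) := by
    have h := List.pairwise_mergeSort (le := le)
      (fun a b c hab hbc => decide_eq_true
        (leW_trans hA hall a b c (decide_eq_true_iff.mp hab) (decide_eq_true_iff.mp hbc)))
      (fun a b => by
        rcases leW_total (n := n) w a b with h | h <;> simp [hle, h])
      (List.range' 1 n)
    exact h.imp (fun hx => decide_eq_true_iff.mp hx)
  have hpg := List.pairwise_iff_get.mp hsorted
  have key : ∀ p q : Fin π.length, p < q → Prec w (π.get p) (π.get q) := by
    intro p q hpq
    have h := hpg p q hpq
    have h1 := (hmemπ _).mp (π.get_mem p)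
    have h2 := (hmemπ _).mp (π.get_mem q)
    simp only [LeW] at h
    rw [if_pos h1, if_pos h2] at h
    refine h.resolve_left (fun he => ?_)
    exact absurd (hnd.get_inj_iff.mp he) (ne_of_lt hpq)
  have claimA : ∀ x y, Prec w x y → EveryBefore π x y := by
    intro x y hxy p q hp hq
    rcases lt_trichotomy p q with h | h | h
    · exact h
    · exact absurd (hp.symm.trans (h ▸ hq)) (prec_ne hxy)
    · exact absurd (key q p h) (fun hk => prec_asymm hxy (by rwa [hp, hq] at hk))
  have claimB : ∀ x y, x ∈ π → y ∈ π → EveryBefore π x y → Prec w x y := by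
    intro x y hx hy hEB
    obtain ⟨p, hp⟩ := mem_pos hx
    obtain ⟨q, hq⟩ := mem_pos hy
    have := key p q (hEB p q hp hq)
    rwa [hp, hq] at this
  refine ⟨π, hperm, ?_, ?_, ?_, ?_⟩
  · -- Avoids231 π
    rintro ⟨p, q, r, hpq, hqr, h1, h2⟩
    have hbc : Prec w (π.get p) (π.get q) := key p q hpq
    have hca : Prec w (π.get q) (π.get r) := key q r hqr
    rcases hbc with ⟨_, hns⟩ | ⟨hlt, _⟩
    swap
    · omega
    obtain ⟨pc, qb, hpc, hqb, hle2⟩ := not_everyBefore hns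
    rcases hca with ⟨hlt, _⟩ | ⟨_, hs⟩
    · omega
    have haw : π.get r ∈ w := hall _ ((hmemπ _).mp (π.get_mem r)).1 ((hmemπ _).mp (π.get_mem r)).2
    obtain ⟨pa, hpa⟩ := mem_pos haw
    exact no231 hA qb pc pa hqb hpc hpa hle2 (hs pc pa hpc hpa) h1 h2
  · intro x hx; exact (hmemπ x).mp hx
  · intro i h1 h2; exact (hmemπ i).mpr ⟨h1, h2⟩
  · intro i j hi hij hj
    rw [hadj i j hi hij hj]
    constructor
    · intro hs
      exact claimA j i (Or.inr ⟨hij, hs⟩)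
    · intro hEB
      have := claimB j i ((hmemπ j).mpr ⟨by omega, hj⟩) ((hmemπ i).mpr ⟨hi, by omega⟩) hEB
      rcases this with ⟨hlt, _⟩ | ⟨_, hs⟩
      · omega
      · exact hs
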